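/- Fix a non-zero polynomial p on ℂⁿ and A > 0. Then there exists a constant c_A > 0 depending only on p and A such that for every entire function F on ℂⁿ with sup_{z} |p(z)F(z)| e^{-A|z|} < ∞, one has sup_{z} |F(z)| e^{-√n·A|z|} ≤ c_A · sup_{z} |p(z)F(z)| e^{-A|z|}. -/

import Mathlib

lemma one_le_multiset_prod_real (m : Multiset ℝ) (h : ∀ x ∈ m, 1 ≤ x) : 1 ≤ m.prod := by
  induction m using Multiset.induction_on with
  | empty => simp
  | cons a s ih =>
    rw [Multiset.prod_cons]
    have h1 := h a (Multiset.mem_cons_self a s)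
    have h2 := ih fun x hx => h x (Multiset.mem_cons_of_mem hx)
    nlinarith

lemma norm_multiset_prod_aux (m : Multiset ℂ) : ‖m.prod‖ = (m.map fun x => ‖x‖).prod :=
  map_multiset_prod (normHom : ℂ →*₀ ℝ) m

open Polynomial in
theorem oneVar (q : Polynomial ℂ) (f : ℂ → ℂ) (hf : Differentiable ℂ f) (C : ℝ)
    (hC : ∀ t : ℂ, ‖t‖ = 1 → ‖q.eval t * f t‖ ≤ C) :
    ‖q.leadingCoeff‖ * ‖f 0‖ ≤ C := by
  have hC0 : 0 ≤ C := le_trans (by positivity) (hC 1 (by simp))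
  rcases eq_or_ne q 0 with rfl | hq
  · simpa using hC0
  set a := q.leadingCoeff with ha
  set R := q.roots with hR
  have hsplit : q = Polynomial.C a * (R.map fun r => X - Polynomial.C r).prod :=
    (IsAlgClosed.splits q).eq_prod_roots
  set qs : Polynomial ℂ := Polynomial.C a *
    (R.map fun r => if 1 ≤ ‖r‖ then X - Polynomial.C r
      else 1 - Polynomial.C ((starRingEnd ℂ) r) * X).prod with hqs
  -- |qs(t)| = |q(t)| on the unit circle
  have habs : ∀ t : ℂ, ‖t‖ = 1 →
      ‖qs.eval t‖ = ‖q.eval t‖ := by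
    intro t ht
    have htt : t * (starRingEnd ℂ) t = 1 := by
      rw [Complex.mul_conj]
      norm_cast
      rw [Complex.normSq_eq_norm_sq, ht, one_pow]
    conv_rhs => rw [hsplit]
    simp only [hqs, eval_mul, eval_C, eval_multiset_prod, Multiset.map_map,
      norm_mul, norm_multiset_prod_aux]
    congr 1
    refine congrArg _ (Multiset.map_congr rfl fun r _ => ?_)
    simp only [Function.comp_apply]
    by_cases hr : 1 ≤ ‖r‖
    · rw [if_pos hr]
    · rw [if_neg hr]
      have h1 : eval t (X - Polynomial.C r) = t * (starRingEnd ℂ)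
          (eval t (1 - Polynomial.C ((starRingEnd ℂ) r) * X)) := by
        simp only [eval_sub, eval_one, eval_mul, eval_C, eval_X, map_sub, map_one, map_mul,
          Complex.conj_conj]
        calc t - r = t - r * (t * (starRingEnd ℂ) t) := by rw [htt]; ring
        _ = t * (1 - r * (starRingEnd ℂ) t) := by ring
      rw [h1, norm_mul, Complex.norm_conj, ht, one_mul]
  -- |qs(0)| ≥ |a|
  have hqs0 : ‖a‖ ≤ ‖qs.eval 0‖ := by
    simp only [hqs, eval_mul, eval_C, eval_multiset_prod, Multiset.map_map,
      norm_mul, norm_multiset_prod_aux]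
    have h1 : (1 : ℝ) ≤ (R.map ((fun x : ℂ => ‖x‖) ∘ eval 0 ∘ fun r =>
        if 1 ≤ ‖r‖ then X - Polynomial.C r
        else 1 - Polynomial.C ((starRingEnd ℂ) r) * X)).prod := by
      refine one_le_multiset_prod_real _ fun x hx => ?_
      obtain ⟨r, -, rfl⟩ := Multiset.mem_map.1 hx
      by_cases hr : 1 ≤ ‖r‖
      · simpa [hr] using hr
      · simp [hr]
    nlinarith [norm_nonneg a]
  -- maximum modulus
  have hgd : Differentiable ℂ fun t : ℂ => qs.eval t * f t := (qs.differentiable).mul hf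
  have hmax : ‖qs.eval 0 * f 0‖ ≤ C := by
    refine Complex.norm_le_of_forall_mem_frontier_norm_le Metric.isBounded_ball
      hgd.diffContOnCl (fun z hz => ?_)
      (subset_closure (Metric.mem_ball_self one_pos))
    rw [frontier_ball (0 : ℂ) one_ne_zero] at hz
    have hz1 : ‖z‖ = 1 := by
      rwa [mem_sphere_zero_iff_norm] at hz
    rw [norm_mul, habs z hz1, ← norm_mul]
    exact hC z hz1
  calc ‖a‖ * ‖f 0‖
      ≤ ‖qs.eval 0‖ * ‖f 0‖ :=
        mul_le_mul_of_nonneg_right hqs0 (norm_nonneg _)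
    _ = ‖qs.eval 0 * f 0‖ := (norm_mul _ _).symm
    _ ≤ C := by exact hmax

open Polynomial MvPolynomial

noncomputable def lineSub {n : ℕ} (z v : Fin n → ℂ) : Fin n → Polynomial ℂ :=
  fun i => Polynomial.C (z i) + Polynomial.X * Polynomial.C (v i)

lemma lineSub_natDegree {n : ℕ} (z v : Fin n → ℂ) (i : Fin n) :
    (lineSub z v i).natDegree ≤ 1 := by
  refine (natDegree_add_le _ _).trans (max_le (by simp) ?_)
  refine (natDegree_mul_le).trans ?_
  simp

lemma lineSub_coeff_one {n : ℕ} (z v : Fin n → ℂ) (i : Fin n) :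
    (lineSub z v i).coeff 1 = v i := by
  simp [lineSub, Polynomial.coeff_add, Polynomial.coeff_C]

lemma coeff_prod_pow {ι : Type*} (s : Finset ι) (g : ι → Polynomial ℂ) (k : ι → ℕ)
    (h : ∀ i ∈ s, (g i).natDegree ≤ 1) :
    (∏ i ∈ s, g i ^ k i).coeff (∑ i ∈ s, k i) = ∏ i ∈ s, (g i).coeff 1 ^ k i := by
  classical
  induction s using Finset.induction_on with
  | empty => simp
  | @insert a s ha ih =>
    have h1 : (g a ^ k a).natDegree ≤ k a :=
      natDegree_pow_le.trans (by
        simpa using Nat.mul_le_mul_left (k a) (h a (Finset.mem_insert_self a s)))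
    have h2 : (∏ i ∈ s, g i ^ k i).natDegree ≤ ∑ i ∈ s, k i := by
      refine (natDegree_prod_le _ _).trans (Finset.sum_le_sum fun i hi => ?_)
      exact natDegree_pow_le.trans (by
        simpa using Nat.mul_le_mul_left (k i) (h i (Finset.mem_insert_of_mem hi)))
    rw [Finset.prod_insert ha, Finset.sum_insert ha, Finset.prod_insert ha,
      coeff_mul_add_eq_of_natDegree_le h1 h2, ih fun i hi => h i (Finset.mem_insert_of_mem hi)]
    congr 1
    have := coeff_pow_of_natDegree_le (m := k a) (h a (Finset.mem_insert_self a s))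
    rwa [mul_one] at this

lemma aeval_lineSub_natDegree_le {n : ℕ} (p : MvPolynomial (Fin n) ℂ) (z v : Fin n → ℂ) :
    (MvPolynomial.aeval (lineSub z v) p).natDegree ≤ p.totalDegree := by
  conv_lhs => rw [← p.support_sum_monomial_coeff]
  rw [map_sum]
  refine natDegree_sum_le_of_forall_le _ _ fun a ha => ?_
  rw [MvPolynomial.aeval_monomial]
  refine natDegree_mul_le.trans ?_
  have h1 : (algebraMap ℂ (Polynomial ℂ) (MvPolynomial.coeff a p)).natDegree = 0 := by
    simp [Polynomial.algebraMap_eq]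
  rw [h1, zero_add]
  refine (natDegree_prod_le _ _).trans (le_trans ?_ (MvPolynomial.le_totalDegree ha))
  rw [Finsupp.sum]
  refine Finset.sum_le_sum fun i hi => ?_
  exact natDegree_pow_le.trans (by simpa using Nat.mul_le_mul_left (a i) (lineSub_natDegree z v i))

lemma coeff_aeval_lineSub {n : ℕ} (p : MvPolynomial (Fin n) ℂ) (z v : Fin n → ℂ) :
    (MvPolynomial.aeval (lineSub z v) p).coeff p.totalDegree
      = MvPolynomial.eval v (homogeneousComponent p.totalDegree p) := by
  classical
  set d := p.totalDegree with hd
  conv_lhs => rw [← p.support_sum_monomial_coeff]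
  rw [map_sum, finset_sum_coeff, homogeneousComponent_apply, map_sum, Finset.sum_filter]
  refine Finset.sum_congr rfl fun a ha => ?_
  rw [MvPolynomial.aeval_monomial]
  by_cases hcase : a.degree = d
  · rw [if_pos hcase, MvPolynomial.eval_monomial]
    have hsum : ∑ i ∈ a.support, a i = d := by rwa [← Finsupp.degree_apply]
    have : (Finsupp.prod a fun i k => lineSub z v i ^ k)
        = ∏ i ∈ a.support, lineSub z v i ^ a i := rfl
    rw [this, Polynomial.algebraMap_eq, Polynomial.coeff_C_mul, ← hsum,
      coeff_prod_pow _ _ _ fun i _ => lineSub_natDegree z v i]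
    congr 1
    rw [Finsupp.prod]
    exact Finset.prod_congr rfl fun i _ => by rw [lineSub_coeff_one]
  · rw [if_neg hcase]
    have hdeglt : (algebraMap ℂ (Polynomial ℂ) (MvPolynomial.coeff a p)
        * Finsupp.prod a fun i k => lineSub z v i ^ k).natDegree < d := by
      have hle : (Finsupp.prod a fun i k => lineSub z v i ^ k).natDegree
          ≤ ∑ i ∈ a.support, a i := by
        rw [Finsupp.prod]
        refine (natDegree_prod_le _ _).trans (Finset.sum_le_sum fun i hi => ?_)
        exact natDegree_pow_le.trans
          (by simpa using Nat.mul_le_mul_left (a i) (lineSub_natDegree z v i))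
      have hlt : ∑ i ∈ a.support, a i < d := by
        have hle2 : (a.sum fun _ e => e) ≤ d := MvPolynomial.le_totalDegree ha
        have : (a.sum fun _ e => e) = ∑ i ∈ a.support, a i := rfl
        rw [this] at hle2
        rcases lt_or_eq_of_le hle2 with h | h
        · exact h
        · exact absurd (by rwa [Finsupp.degree_apply]) hcase
      refine lt_of_le_of_lt (natDegree_mul_le.trans ?_) hlt
      rw [Polynomial.algebraMap_eq, natDegree_C, zero_add]
      exact hle
    exact coeff_eq_zero_of_natDegree_lt hdeglt

lemma eval_aeval_lineSub {n : ℕ} (p : MvPolynomial (Fin n) ℂ) (z v : Fin n → ℂ) (t : ℂ) :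
    (MvPolynomial.aeval (lineSub z v) p).eval t
      = MvPolynomial.eval (fun i => z i + t * v i) p := by
  induction p using MvPolynomial.induction_on with
  | C a => simp [Polynomial.algebraMap_eq]
  | add p q hp hq => simp [map_add, hp, hq]
  | mul_X p i hp =>
    rw [map_mul, Polynomial.eval_mul, hp, map_mul, MvPolynomial.aeval_X,
      MvPolynomial.eval_X]
    simp only [lineSub, Polynomial.eval_add, Polynomial.eval_mul, Polynomial.eval_C,
      Polynomial.eval_X]

/-- The Euclidean norm on ℂⁿ. -/
noncomputable def enorm' {n : ℕ} (z : Fin n → ℂ) : ℝ :=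
  Real.sqrt (∑ i, ‖z i‖ ^ 2)

lemma enorm'_eq {n : ℕ} (z : Fin n → ℂ) :
    enorm' z = ‖(WithLp.equiv 2 (Fin n → ℂ)).symm z‖ := by
  rw [EuclideanSpace.norm_eq, enorm']
  simp

lemma enorm'_nonneg {n : ℕ} (z : Fin n → ℂ) : 0 ≤ enorm' z := Real.sqrt_nonneg _

lemma enorm'_add_le {n : ℕ} (x y : Fin n → ℂ) :
    enorm' (fun i => x i + y i) ≤ enorm' x + enorm' y := by
  rw [enorm'_eq, enorm'_eq, enorm'_eq]
  exact norm_add_le ((WithLp.equiv 2 (Fin n → ℂ)).symm x) ((WithLp.equiv 2 (Fin n → ℂ)).symm y)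

lemma enorm'_smul {n : ℕ} (t : ℂ) (v : Fin n → ℂ) :
    enorm' (fun i => t * v i) = ‖t‖ * enorm' v := by
  rw [enorm'_eq, enorm'_eq]
  have h : (WithLp.equiv 2 (Fin n → ℂ)).symm (fun i => t * v i)
      = t • (WithLp.equiv 2 (Fin n → ℂ)).symm v := rfl
  rw [h, norm_smul]
theorem stmt_4 {n : ℕ} (p : MvPolynomial (Fin n) ℂ) (hp : p ≠ 0) (A : ℝ) (hA : 0 < A) :
    ∃ c : ℝ, 0 < c ∧ ∀ F : (Fin n → ℂ) → ℂ, Differentiable ℂ F →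
      ∀ M : ℝ,
        (∀ z, ‖MvPolynomial.eval z p * F z‖ * Real.exp (-(A * enorm' z)) ≤ M) →
        ∀ z, ‖F z‖ * Real.exp (-(Real.sqrt n * A * enorm' z)) ≤ c * M := by
  classical
  set d := p.totalDegree with hd
  set r := MvPolynomial.homogeneousComponent d p with hr_def
  -- the top homogeneous component is nonzero
  have hr : r ≠ 0 := by
    obtain ⟨a, ha, had⟩ := Finset.exists_mem_eq_sup p.support
      (MvPolynomial.support_nonempty.mpr hp) (fun s => s.sum fun _ e => e)
    have hadeg : a.degree = d := by
      rw [Finsupp.degree_apply]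
      exact had.symm
    intro h0
    have hc := MvPolynomial.coeff_homogeneousComponent (n := d) (φ := p) a
    rw [← hr_def, h0, if_pos hadeg] at hc
    exact MvPolynomial.mem_support_iff.mp ha hc.symm
  -- choose a direction where it doesn't vanish
  obtain ⟨v, hv⟩ : ∃ v, MvPolynomial.eval v r ≠ 0 := by
    by_contra h
    push_neg at h
    exact hr (MvPolynomial.funext fun x => by simp [h x])
  have hC0pos : 0 < ‖MvPolynomial.eval v r‖ := norm_pos_iff.mpr hv
  refine ⟨Real.exp (A * enorm' v) / ‖MvPolynomial.eval v r‖,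
    div_pos (Real.exp_pos _) hC0pos, ?_⟩
  intro F hF M hM z
  have hM0 : 0 ≤ M := le_trans (by positivity) (hM 0)
  set q := MvPolynomial.aeval (lineSub z v) p with hq_def
  have hqcoeff : q.coeff d = MvPolynomial.eval v r := coeff_aeval_lineSub p z v
  have hqdeg : q.natDegree = d :=
    le_antisymm (aeval_lineSub_natDegree_le p z v)
      (Polynomial.le_natDegree_of_ne_zero (by rw [hqcoeff]; exact hv))
  have hlead : q.leadingCoeff = MvPolynomial.eval v r := by
    rw [Polynomial.leadingCoeff, hqdeg, hqcoeff]
  set f : ℂ → ℂ := fun t => F (fun i => z i + t * v i) with hf_def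
  have hfd : Differentiable ℂ f :=
    hF.comp (differentiable_pi.mpr fun i =>
      (differentiable_id.mul_const (v i)).const_add (z i))
  have hbound : ∀ t : ℂ, ‖t‖ = 1 →
      ‖q.eval t * f t‖ ≤ M * Real.exp (A * (enorm' z + enorm' v)) := by
    intro t ht
    rw [eval_aeval_lineSub]
    set w := fun i => z i + t * v i with hw
    have h1 := hM w
    have h2 : ‖MvPolynomial.eval w p * F w‖
        ≤ M * Real.exp (A * enorm' w) := by
      have hexp : Real.exp (-(A * enorm' w)) * Real.exp (A * enorm' w) = 1 := by
        rw [← Real.exp_add]; simp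
      calc ‖MvPolynomial.eval w p * F w‖
          = (‖MvPolynomial.eval w p * F w‖ * Real.exp (-(A * enorm' w)))
            * Real.exp (A * enorm' w) := by rw [mul_assoc, hexp, mul_one]
        _ ≤ M * Real.exp (A * enorm' w) :=
            mul_le_mul_of_nonneg_right h1 (Real.exp_pos _).le
    have h3 : enorm' w ≤ enorm' z + enorm' v := by
      have h4 := enorm'_add_le z (fun i => t * v i)
      rwa [enorm'_smul t v, ht, one_mul] at h4
    exact h2.trans (mul_le_mul_of_nonneg_left
      (Real.exp_le_exp.mpr (mul_le_mul_of_nonneg_left h3 hA.le)) hM0)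
  have key := oneVar q f hfd (M * Real.exp (A * (enorm' z + enorm' v))) hbound
  -- f 0 = F z
  have hz0 : (fun i => z i + (0:ℂ) * v i) = z := by funext i; simp
  have hf0 : f 0 = F z := congrArg F hz0
  rw [hlead, hf0] at key
  -- compare exponentials
  have hle1 : A * enorm' z ≤ Real.sqrt n * A * enorm' z := by
    rcases Nat.eq_zero_or_pos n with hn | hn
    · subst hn
      have : enorm' z = 0 := by simp [enorm']
      simp [this]
    · have h1 : (1 : ℝ) ≤ Real.sqrt n := by
        rw [show (1:ℝ) = Real.sqrt 1 by simp]
        exact Real.sqrt_le_sqrt (by exact_mod_cast hn)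
      have h2 : 0 ≤ A * enorm' z := mul_nonneg hA.le (enorm'_nonneg z)
      calc A * enorm' z = 1 * (A * enorm' z) := (one_mul _).symm
        _ ≤ Real.sqrt n * (A * enorm' z) := mul_le_mul_of_nonneg_right h1 h2
        _ = Real.sqrt n * A * enorm' z := (mul_assoc _ _ _).symm
  have habsz : Real.exp (-(Real.sqrt n * A * enorm' z)) ≤ Real.exp (-(A * enorm' z)) :=
    Real.exp_le_exp.mpr (neg_le_neg hle1)
  have hFz : ‖F z‖
      ≤ M * Real.exp (A * (enorm' z + enorm' v)) / ‖MvPolynomial.eval v r‖ := by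
    rw [le_div_iff₀ hC0pos, mul_comm]
    exact key
  calc ‖F z‖ * Real.exp (-(Real.sqrt n * A * enorm' z))
      ≤ ‖F z‖ * Real.exp (-(A * enorm' z)) :=
        mul_le_mul_of_nonneg_left habsz (norm_nonneg _)
    _ ≤ (M * Real.exp (A * (enorm' z + enorm' v)) / ‖MvPolynomial.eval v r‖)
          * Real.exp (-(A * enorm' z)) :=
        mul_le_mul_of_nonneg_right hFz (Real.exp_pos _).le
    _ = Real.exp (A * enorm' v) / ‖MvPolynomial.eval v r‖ * M := by
        have hexp : Real.exp (A * (enorm' z + enorm' v)) * Real.exp (-(A * enorm' z))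
            = Real.exp (A * enorm' v) := by
          rw [← Real.exp_add, show A * (enorm' z + enorm' v) + -(A * enorm' z)
            = A * enorm' v by ring]
        rw [div_mul_eq_mul_div, mul_assoc, hexp]
        ring
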